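/- For every integer $q \geq 1$, $\sum_{T \in \mathfrak{T}(\underline{q})} \prod_{p=1}^{q} d^T(p)! \leq (q-1)! \, 8^q$, where $\mathfrak{T}(\underline{q})$ is the set of trees on the vertex set $\{1, \dots, q\}$ and $d^T(p)$ is the degree of vertex $p$ in $T$. -/

import Mathlib

open scoped Classical

namespace TreeB

open SimpleGraph Finset

variable {n : ℕ}

section Paths

variable (T : SimpleGraph (Fin (n+1))) (hT : T.IsTree)

noncomputable def pth (v : Fin (n+1)) : T.Walk v 0 :=
  (hT.existsUnique_path v 0).choose

lemma pth_isPath (v : Fin (n+1)) : (pth T hT v).IsPath :=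
  (hT.existsUnique_path v 0).choose_spec.1

lemma pth_unique {v : Fin (n+1)} (p : T.Walk v 0) (hp : p.IsPath) : p = pth T hT v :=
  (hT.existsUnique_path v 0).choose_spec.2 p hp

noncomputable def depth (v : Fin (n+1)) : ℕ := (pth T hT v).length

noncomputable def parent (v : Fin (n+1)) : Fin (n+1) := (pth T hT v).getVert 1

lemma pth_zero : pth T hT 0 = SimpleGraph.Walk.nil :=
  (pth_unique T hT _ SimpleGraph.Walk.IsPath.nil).symm

lemma depth_zero : depth T hT 0 = 0 := by rw [depth, pth_zero]; rfl

lemma parent_zero : parent T hT 0 = 0 := by rw [parent, pth_zero]; rfl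

lemma depth_eq_zero_iff {v : Fin (n+1)} : depth T hT v = 0 ↔ v = 0 := by
  constructor
  · intro h; exact SimpleGraph.Walk.eq_of_length_eq_zero h
  · rintro rfl; exact depth_zero T hT

lemma pth_eq_cons {v : Fin (n+1)} (h : v ≠ 0) :
    ∃ ha : T.Adj v (parent T hT v),
      pth T hT v = SimpleGraph.Walk.cons ha (pth T hT (parent T hT v)) := by
  obtain ⟨w, ha, p', hp⟩ := SimpleGraph.Walk.exists_eq_cons_of_ne h (pth T hT v)
  have hw : parent T hT v = w := by
    rw [parent, hp, SimpleGraph.Walk.getVert_cons_succ, SimpleGraph.Walk.getVert_zero]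
  subst hw
  have hp' : p'.IsPath := by
    have h2 := pth_isPath T hT v
    rw [hp] at h2
    exact h2.of_cons
  rw [pth_unique T hT p' hp'] at hp
  exact ⟨ha, hp⟩

lemma adj_parent {v : Fin (n+1)} (h : v ≠ 0) : T.Adj v (parent T hT v) :=
  (pth_eq_cons T hT h).choose

lemma depth_parent {v : Fin (n+1)} (h : v ≠ 0) :
    depth T hT (parent T hT v) + 1 = depth T hT v := by
  obtain ⟨ha, hc⟩ := pth_eq_cons T hT h
  rw [depth, depth, hc, SimpleGraph.Walk.length_cons]

lemma depth_parent_lt {v : Fin (n+1)} (h : v ≠ 0) :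
    depth T hT (parent T hT v) < depth T hT v := by
  have := depth_parent T hT h; omega

lemma ne_parent_of_parent_eq {u v : Fin (n+1)} (hu : u ≠ 0) (hpu : parent T hT u = v) :
    u ≠ parent T hT v := by
  intro hup
  by_cases hv : v = 0
  · subst hv; rw [parent_zero] at hup; exact hu hup
  · have h1 := depth_parent T hT hu
    have h2 := depth_parent T hT hv
    rw [hpu] at h1; rw [← hup] at h2; omega

lemma adj_iff {u v : Fin (n+1)} :
    T.Adj u v ↔ (u ≠ 0 ∧ parent T hT u = v) ∨ (v ≠ 0 ∧ parent T hT v = u) := by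
  constructor
  · intro h
    by_cases hpath : (SimpleGraph.Walk.cons h (pth T hT v)).IsPath
    · left
      have he : SimpleGraph.Walk.cons h (pth T hT v) = pth T hT u := pth_unique T hT _ hpath
      constructor
      · intro h0
        subst h0
        have : (pth T hT (0 : Fin (n+1))).length = 0 := by rw [pth_zero]; rfl
        rw [← he] at this
        simp [SimpleGraph.Walk.length_cons] at this
      · rw [parent, ← he, SimpleGraph.Walk.getVert_cons_succ, SimpleGraph.Walk.getVert_zero]
    · rw [SimpleGraph.Walk.cons_isPath_iff] at hpath
      push_neg at hpath
      have hu : u ∈ (pth T hT v).support := hpath (pth_isPath T hT v)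
      right
      have hv0 : v ≠ 0 := by
        intro h0
        subst h0
        rw [pth_zero] at hu
        simp at hu
        exact h.ne hu
      refine ⟨hv0, ?_⟩
      -- the unique path from v to u is the single edge
      have hsingle : (SimpleGraph.Walk.cons h.symm SimpleGraph.Walk.nil : T.Walk v u).IsPath := by
        rw [SimpleGraph.Walk.cons_isPath_iff]
        refine ⟨SimpleGraph.Walk.IsPath.nil, ?_⟩
        simp [h.ne']
      have htake : ((pth T hT v).takeUntil u hu).IsPath := (pth_isPath T hT v).takeUntil hu
      have huniq : (pth T hT v).takeUntil u hu
          = SimpleGraph.Walk.cons h.symm SimpleGraph.Walk.nil := by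
        have := (SimpleGraph.isAcyclic_iff_path_unique.mp hT.2)
          ⟨(pth T hT v).takeUntil u hu, htake⟩ ⟨SimpleGraph.Walk.cons h.symm SimpleGraph.Walk.nil, hsingle⟩
        exact congrArg Subtype.val this
      have hspec := (pth T hT v).take_spec hu
      rw [parent, ← hspec, huniq]
      simp [SimpleGraph.Walk.cons_append, SimpleGraph.Walk.getVert_cons_succ,
        SimpleGraph.Walk.getVert_zero]
  · rintro (⟨hu, rfl⟩ | ⟨hv, rfl⟩)
    · exact adj_parent T hT hu
    · exact (adj_parent T hT hv).symm


end Paths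

-- pure list lemmas
lemma lex_cons_iff {a b : ℕ} {l m : List ℕ} :
    List.Lex (· < ·) (a :: l) (b :: m) ↔ a < b ∨ (a = b ∧ List.Lex (· < ·) l m) := by
  constructor
  · intro h
    cases h with
    | cons h => exact Or.inr ⟨rfl, h⟩
    | rel h => exact Or.inl h
  · rintro (h | ⟨rfl, h⟩)
    · exact List.Lex.rel h
    · exact List.Lex.cons h

lemma lex_append_iff {A : List ℕ} : ∀ {B : List ℕ} {a b : ℕ}, A.length = B.length →
    (List.Lex (· < ·) (A ++ [a]) (B ++ [b]) ↔
      List.Lex (· < ·) A B ∨ (A = B ∧ a < b)) := by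
  induction A with
  | nil =>
    intro B a b hB
    cases B with
    | nil =>
      simp [List.lex_singleton_iff, List.not_lex_nil]
    | cons y B => simp at hB
  | cons x A ih =>
    intro B a b hB
    cases B with
    | nil => simp at hB
    | cons y B =>
      simp only [List.cons_append, lex_cons_iff, List.cons.injEq]
      rw [ih (by simpa using hB)]
      have : A = B → A.length = B.length := fun h => h ▸ rfl
      tauto

lemma trichot_list (l m : List ℕ) :
    List.Lex (· < ·) l m ∨ l = m ∨ List.Lex (· < ·) m l :=
  trichotomous_of (List.Lex (· < ·)) l m

lemma not_lex_self (l : List ℕ) : ¬ List.Lex (· < ·) l l := irrefl_of (List.Lex (· < ·)) l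

lemma lex_trans {a b c : List ℕ} (h : List.Lex (· < ·) a b) (h' : List.Lex (· < ·) b c) :
    List.Lex (· < ·) a c := List.lex_trans Nat.lt_trans h h'

-- binary word blocks
def FB (k : ℕ) : List Bool := List.replicate k false

def BB (p : ℕ × ℕ) : List Bool := true :: (FB p.1 ++ true :: FB p.2)

def GoodW (r : List Bool) : Prop := r = [] ∨ ∃ t, r = true :: t

lemma FB_parse : ∀ {a a' : ℕ} {t t' : List Bool},
    FB a ++ true :: t = FB a' ++ true :: t' → a = a' ∧ t = t' := by
  intro a
  induction a with
  | zero =>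
    intro a' t t' h
    cases a' with
    | zero => simpa [FB] using h
    | succ a' => simp [FB, List.replicate_succ] at h
  | succ a ih =>
    intro a' t t' h
    cases a' with
    | zero => simp [FB, List.replicate_succ] at h
    | succ a' =>
      simp only [FB, List.replicate_succ, List.cons_append, List.cons.injEq, true_and] at h
      obtain ⟨h1, h2⟩ := ih (a' := a') h
      exact ⟨by omega, h2⟩

lemma FB_parse_good : ∀ {a a' : ℕ} {r r' : List Bool},
    FB a ++ r = FB a' ++ r' → GoodW r → GoodW r' → a = a' ∧ r = r' := by
  intro a
  induction a with
  | zero =>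
    intro a' r r' h hg hg'
    cases a' with
    | zero => simpa [FB] using h
    | succ a' =>
      simp only [FB, List.nil_append, List.replicate_succ, List.cons_append] at h
      rcases hg with rfl | ⟨t, rfl⟩
      · simp at h
      · simp at h
  | succ a ih =>
    intro a' r r' h hg hg'
    cases a' with
    | zero =>
      simp only [FB, List.nil_append, List.replicate_succ, List.cons_append] at h
      rcases hg' with rfl | ⟨t, rfl⟩
      · simp at h
      · simp at h
    | succ a' =>
      simp only [FB, List.replicate_succ, List.cons_append, List.cons.injEq, true_and] at h
      obtain ⟨h1, h2⟩ := ih (a' := a') h hg hg'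
      exact ⟨by omega, h2⟩

lemma good_joinBB : ∀ (L : List (ℕ × ℕ)), GoodW (L.map BB).flatten
  | [] => Or.inl (by simp)
  | p :: L => Or.inr ⟨(FB p.1 ++ true :: FB p.2) ++ (List.map BB L).flatten, by simp [BB]⟩

lemma BB_parse {p p' : ℕ × ℕ} {r r' : List Bool} (hg : GoodW r) (hg' : GoodW r')
    (h : BB p ++ r = BB p' ++ r') : p = p' ∧ r = r' := by
  simp only [BB, List.cons_append, List.cons.injEq, true_and, List.append_assoc,
    List.cons_append] at h
  obtain ⟨h1, h2⟩ := FB_parse h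
  obtain ⟨h3, h4⟩ := FB_parse_good h2 hg hg'
  exact ⟨Prod.ext h1 h3, h4⟩

lemma joinBB_parse : ∀ {L L' : List (ℕ × ℕ)},
    (L.map BB).flatten = (L'.map BB).flatten → L = L' := by
  intro L
  induction L with
  | nil =>
    intro L' h
    cases L' with
    | nil => rfl
    | cons p L' => simp [BB] at h
  | cons p L ih =>
    intro L' h
    cases L' with
    | nil => simp [BB] at h
    | cons p' L' =>
      simp only [List.map_cons, List.flatten_cons] at h
      obtain ⟨h1, h2⟩ := BB_parse (good_joinBB L) (good_joinBB L') h
      rw [h1, ih h2]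

lemma word_parse {c0 c0' : ℕ} {L L' : List (ℕ × ℕ)}
    (h : FB c0 ++ (L.map BB).flatten = FB c0' ++ (L'.map BB).flatten) : c0 = c0' ∧ L = L' := by
  obtain ⟨h1, h2⟩ := FB_parse_good h (good_joinBB L) (good_joinBB L')
  exact ⟨h1, joinBB_parse h2⟩

lemma length_FB (k : ℕ) : (FB k).length = k := List.length_replicate

lemma length_BB (p : ℕ × ℕ) : (BB p).length = p.1 + p.2 + 2 := by
  simp [BB, FB]
  omega

section Enc

variable (T : SimpleGraph (Fin (n+1))) (hT : T.IsTree)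
  (g : ∀ p : Fin (n+1), T.neighborSet p ≃ Fin (T.degree p))

noncomputable def rv (v : Fin (n+1)) : ℕ :=
  if h : v = 0 then 0 else (g (parent T hT v) ⟨v, (adj_parent T hT h).symm⟩).val

noncomputable def sl (v : Fin (n+1)) : ℕ :=
  if h : v = 0 then 0 else (g v ⟨parent T hT v, adj_parent T hT h⟩).val

lemma rv_eq {v w : Fin (n+1)} (h : v ≠ 0) (hw : parent T hT v = w) (hadj : T.Adj w v) :
    rv T hT g v = (g w ⟨v, hadj⟩).val := by
  subst hw
  rw [rv, dif_neg h]

lemma sl_eq {v : Fin (n+1)} (h : v ≠ 0) :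
    sl T hT g v = (g v ⟨parent T hT v, adj_parent T hT h⟩).val := by
  rw [sl, dif_neg h]

lemma rv_lt_degree {v w : Fin (n+1)} (h : v ≠ 0) (hw : parent T hT v = w) :
    rv T hT g v < T.degree w := by
  have hadj : T.Adj w v := (hw ▸ adj_parent T hT h).symm
  rw [rv_eq T hT g h hw hadj]
  exact (g w ⟨v, hadj⟩).isLt

lemma rv_sib_inj {u u' w : Fin (n+1)} (hu : u ≠ 0) (hu' : u' ≠ 0)
    (hw : parent T hT u = w) (hw' : parent T hT u' = w)
    (h : rv T hT g u = rv T hT g u') : u = u' := by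
  subst hw
  have ha : T.Adj (parent T hT u) u := (adj_parent T hT hu).symm
  have ha' : T.Adj (parent T hT u) u' := by rw [← hw']; exact (adj_parent T hT hu').symm
  rw [rv_eq T hT g hu rfl ha, rv_eq T hT g hu' hw' ha'] at h
  have h2 := (g (parent T hT u)).injective (Fin.val_injective h)
  exact congrArg Subtype.val h2

noncomputable def rp (v : Fin (n+1)) : List ℕ :=
  if h : v = 0 then [] else rp (parent T hT v) ++ [rv T hT g v]
termination_by depth T hT v
decreasing_by exact depth_parent_lt T hT h

lemma rp_zero : rp T hT g 0 = [] := by rw [rp]; simp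

lemma rp_cons {v : Fin (n+1)} (h : v ≠ 0) :
    rp T hT g v = rp T hT g (parent T hT v) ++ [rv T hT g v] := by
  rw [rp, dif_neg h]

lemma length_rp (v : Fin (n+1)) : (rp T hT g v).length = depth T hT v := by
  generalize hd : depth T hT v = d
  induction d using Nat.strong_induction_on generalizing v with
  | _ d ih =>
    by_cases h : v = 0
    · subst h
      rw [rp_zero]
      rw [depth_zero] at hd
      simp [← hd]
    · rw [rp_cons T hT g h]
      have hlt := depth_parent_lt T hT h
      rw [hd] at hlt
      have h1 := ih _ hlt (parent T hT v) rfl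
      have h2 := depth_parent T hT h
      simp [h1]
      omega

lemma rp_eq_nil_iff {v : Fin (n+1)} : rp T hT g v = [] ↔ v = 0 := by
  rw [← List.length_eq_zero_iff, length_rp, depth_eq_zero_iff]

lemma rp_injective : Function.Injective (rp T hT g) := by
  suffices H : ∀ d u v, depth T hT u = d → rp T hT g u = rp T hT g v → u = v by
    intro u v h; exact H _ u v rfl h
  intro d
  induction d using Nat.strong_induction_on with
  | _ d ih =>
    intro u v hd h
    by_cases hu : u = 0
    · subst hu
      rw [rp_zero] at h
      exact ((rp_eq_nil_iff T hT g).mp h.symm).symm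
    · by_cases hv : v = 0
      · subst hv
        rw [rp_zero] at h
        exact absurd ((rp_eq_nil_iff T hT g).mp h) hu
      · rw [rp_cons T hT g hu, rp_cons T hT g hv] at h
        obtain ⟨hA, hE⟩ := List.append_inj' h rfl
        have hdp : depth T hT (parent T hT u) < d := hd ▸ depth_parent_lt T hT hu
        have hp : parent T hT u = parent T hT v := ih _ hdp _ _ rfl hA
        have hrv : rv T hT g u = rv T hT g v := by simpa using hE
        exact rv_sib_inj T hT g hu hv hp rfl hrv

noncomputable def key (v : Fin (n+1)) : List ℕ := depth T hT v :: rp T hT g v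

def KLT (u v : Fin (n+1)) : Prop := List.Lex (· < ·) (key T hT g u) (key T hT g v)

lemma key_injective : Function.Injective (key T hT g) := by
  intro u v h
  exact rp_injective T hT g (List.tail_eq_of_cons_eq h)

lemma klt_zero {v : Fin (n+1)} (h : v ≠ 0) : KLT T hT g 0 v := by
  have : 0 < depth T hT v := by
    rcases Nat.eq_zero_or_pos (depth T hT v) with h0 | h0
    · exact absurd ((depth_eq_zero_iff T hT).mp h0) h
    · exact h0
  exact List.Lex.rel (by rw [depth_zero]; exact this)

lemma klt_irrefl (v : Fin (n+1)) : ¬ KLT T hT g v v := not_lex_self _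

lemma klt_trichot (u v : Fin (n+1)) : KLT T hT g u v ∨ u = v ∨ KLT T hT g v u := by
  rcases trichot_list (key T hT g u) (key T hT g v) with h | h | h
  · exact Or.inl h
  · exact Or.inr (Or.inl (key_injective T hT g h))
  · exact Or.inr (Or.inr h)

lemma klt_iff {u v : Fin (n+1)} (hu : u ≠ 0) (hv : v ≠ 0) :
    KLT T hT g u v ↔ KLT T hT g (parent T hT u) (parent T hT v) ∨
      (parent T hT u = parent T hT v ∧ rv T hT g u < rv T hT g v) := by
  have hdu := depth_parent T hT hu
  have hdv := depth_parent T hT hv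
  rw [KLT, KLT, key, key, key, key, lex_cons_iff, lex_cons_iff,
    rp_cons T hT g hu, rp_cons T hT g hv]
  constructor
  · rintro (h | ⟨hdep, hlex⟩)
    · exact Or.inl (Or.inl (by omega))
    · have hdpar : depth T hT (parent T hT u) = depth T hT (parent T hT v) := by omega
      rw [lex_append_iff (by rw [length_rp, length_rp, hdpar])] at hlex
      rcases hlex with h | ⟨hrp, hrv⟩
      · exact Or.inl (Or.inr ⟨hdpar, h⟩)
      · exact Or.inr ⟨rp_injective T hT g hrp, hrv⟩
  · rintro ((h | ⟨hdep, hlex⟩) | ⟨hpar, hrv⟩)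
    · exact Or.inl (by omega)
    · refine Or.inr ⟨by omega, ?_⟩
      rw [lex_append_iff (by rw [length_rp, length_rp, hdep])]
      exact Or.inl hlex
    · refine Or.inr ⟨by have := congrArg (depth T hT) hpar; omega, ?_⟩
      rw [lex_append_iff (by rw [length_rp, length_rp, hpar])]
      exact Or.inr ⟨by rw [hpar], hrv⟩

noncomputable def idx (v : Fin (n+1)) : ℕ :=
  (Finset.univ.filter (fun u => KLT T hT g u v)).card

noncomputable def cdeg (v : Fin (n+1)) : ℕ :=
  (Finset.univ.filter (fun u => u ≠ 0 ∧ parent T hT u = v)).card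

noncomputable def rnk (v : Fin (n+1)) : ℕ :=
  (Finset.univ.filter (fun u => u ≠ 0 ∧ parent T hT u = parent T hT v ∧
    rv T hT g u < rv T hT g v)).card

lemma idx_lt (v : Fin (n+1)) : idx T hT g v < n + 1 := by
  have hsub : Finset.univ.filter (fun u => KLT T hT g u v) ⊆ Finset.univ.erase v := by
    intro u hu
    simp only [Finset.mem_filter] at hu
    refine Finset.mem_erase.mpr ⟨?_, Finset.mem_univ u⟩
    rintro rfl
    exact klt_irrefl T hT g _ hu.2
  have h2 : (Finset.univ.erase v).card = n := by
    rw [Finset.card_erase_of_mem (Finset.mem_univ v), Finset.card_univ, Fintype.card_fin]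
    omega
  have h3 : idx T hT g v ≤ (Finset.univ.erase v).card := Finset.card_le_card hsub
  omega

lemma klt_idx_lt {u v : Fin (n+1)} (h : KLT T hT g u v) : idx T hT g u < idx T hT g v := by
  apply Finset.card_lt_card
  constructor
  · intro w hw
    simp only [Finset.mem_filter, Finset.mem_univ, true_and] at hw ⊢
    exact lex_trans hw h
  · intro hcon
    have : u ∈ Finset.univ.filter (fun w => KLT T hT g w u) := by
      apply hcon
      simp only [Finset.mem_filter, Finset.mem_univ, true_and]
      exact h
    simp only [Finset.mem_filter] at this
    exact klt_irrefl T hT g u this.2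

lemma klt_iff_idx_lt {u v : Fin (n+1)} : KLT T hT g u v ↔ idx T hT g u < idx T hT g v := by
  constructor
  · exact klt_idx_lt T hT g
  · intro h
    rcases klt_trichot T hT g u v with h1 | rfl | h1
    · exact h1
    · omega
    · exact absurd h (by have := klt_idx_lt T hT g h1; omega)

lemma idx_injective : Function.Injective (idx T hT g) := by
  intro u v h
  rcases klt_trichot T hT g u v with h1 | h1 | h1
  · exact absurd (klt_idx_lt T hT g h1) (by omega)
  · exact h1
  · exact absurd (klt_idx_lt T hT g h1) (by omega)

lemma idx_zero : idx T hT g 0 = 0 := by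
  rw [idx, Finset.card_eq_zero]
  apply Finset.eq_empty_of_forall_notMem
  intro u hu
  simp only [Finset.mem_filter, Finset.mem_univ, true_and] at hu
  by_cases h : u = 0
  · subst h; exact klt_irrefl T hT g 0 hu
  · exact asymm_of (List.Lex (· < ·)) (klt_zero T hT g h) hu

lemma idx_pos {v : Fin (n+1)} (h : v ≠ 0) : 0 < idx T hT g v := by
  have := klt_idx_lt T hT g (klt_zero T hT g h)
  rw [idx_zero] at this
  omega

noncomputable def IdxE : Fin (n+1) ≃ Fin (n+1) :=
  Equiv.ofBijective (fun v => ⟨idx T hT g v, idx_lt T hT g v⟩)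
    ((Fintype.bijective_iff_injective_and_card _).mpr
      ⟨fun u v h => idx_injective T hT g (by simpa using congrArg Fin.val h), rfl⟩)

lemma IdxE_apply (v : Fin (n+1)) : (IdxE T hT g v : Fin (n+1)).val = idx T hT g v := rfl

lemma IdxE_zero : IdxE T hT g 0 = 0 := by
  have : (IdxE T hT g 0).val = 0 := idx_zero T hT g
  exact Fin.ext this

noncomputable def CumI (j : ℕ) : ℕ :=
  ∑ u ∈ Finset.univ.filter (fun u => idx T hT g u < j), cdeg T hT u

lemma CumI_mono {j j' : ℕ} (h : j ≤ j') : CumI T hT g j ≤ CumI T hT g j' := by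
  apply Finset.sum_le_sum_of_subset
  intro u hu
  simp only [Finset.mem_filter] at hu ⊢
  exact ⟨hu.1, by omega⟩

lemma CumI_succ (w : Fin (n+1)) :
    CumI T hT g (idx T hT g w + 1) = CumI T hT g (idx T hT g w) + cdeg T hT w := by
  rw [CumI, CumI]
  have : Finset.univ.filter (fun u => idx T hT g u < idx T hT g w + 1)
      = insert w (Finset.univ.filter (fun u => idx T hT g u < idx T hT g w)) := by
    ext u
    simp only [Finset.mem_filter, Finset.mem_insert, Finset.mem_univ, true_and]
    constructor
    · intro h
      rcases Nat.lt_succ_iff_lt_or_eq.mp h with h1 | h1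
      · exact Or.inr h1
      · exact Or.inl (idx_injective T hT g h1)
    · rintro (rfl | h)
      · omega
      · omega
  rw [this, Finset.sum_insert (by simp)]
  exact Nat.add_comm _ _

lemma rnk_lt_cdeg {v : Fin (n+1)} (hv : v ≠ 0) :
    rnk T hT g v < cdeg T hT (parent T hT v) := by
  apply Finset.card_lt_card
  constructor
  · intro u hu
    simp only [Finset.mem_filter] at hu ⊢
    exact ⟨hu.1, hu.2.1, hu.2.2.1⟩
  · intro hcon
    have : v ∈ Finset.univ.filter (fun u => u ≠ 0 ∧ parent T hT u = parent T hT v ∧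
        rv T hT g u < rv T hT g v) := by
      apply hcon
      simp [hv]
    simp only [Finset.mem_filter, Finset.mem_univ, true_and] at this
    exact absurd this.2 (lt_irrefl _)

lemma star {v : Fin (n+1)} (hv : v ≠ 0) :
    idx T hT g v = CumI T hT g (idx T hT g (parent T hT v)) + rnk T hT g v + 1 := by
  have h0mem : (0 : Fin (n+1)) ∈ Finset.univ.filter (fun u => KLT T hT g u v) := by
    simp only [Finset.mem_filter, Finset.mem_univ, true_and]
    exact klt_zero T hT g hv
  rw [idx, ← Finset.card_erase_add_one h0mem]
  congr 1
  have herase : (Finset.univ.filter (fun u => KLT T hT g u v)).erase 0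
      = (Finset.univ.filter (fun u => u ≠ 0 ∧ KLT T hT g (parent T hT u) (parent T hT v)))
        ∪ (Finset.univ.filter (fun u => u ≠ 0 ∧ parent T hT u = parent T hT v ∧
            rv T hT g u < rv T hT g v)) := by
    ext u
    simp only [Finset.mem_erase, Finset.mem_filter, Finset.mem_union, Finset.mem_univ, true_and]
    constructor
    · rintro ⟨hu0, hklt⟩
      rcases (klt_iff T hT g hu0 hv).mp hklt with h | h
      · exact Or.inl ⟨hu0, h⟩
      · exact Or.inr ⟨hu0, h⟩
    · rintro (⟨hu0, h⟩ | ⟨hu0, h⟩)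
      · exact ⟨hu0, (klt_iff T hT g hu0 hv).mpr (Or.inl h)⟩
      · exact ⟨hu0, (klt_iff T hT g hu0 hv).mpr (Or.inr h)⟩
  rw [herase, Finset.card_union_of_disjoint]
  · congr 1
    -- first part equals CumI
    rw [CumI]
    rw [Finset.card_eq_sum_card_fiberwise
      (f := fun u => parent T hT u)
      (t := Finset.univ.filter (fun w => idx T hT g w < idx T hT g (parent T hT v)))
      (fun u hu => by
        simp only [Finset.coe_filter, Set.mem_setOf_eq, Finset.mem_filter, Finset.mem_univ, true_and] at hu ⊢
        exact klt_idx_lt T hT g hu.2)]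
    apply Finset.sum_congr rfl
    intro w hw
    simp only [Finset.mem_filter, Finset.mem_univ, true_and] at hw
    rw [cdeg]
    congr 1
    ext u
    simp only [Finset.mem_filter, Finset.mem_univ, true_and]
    constructor
    · rintro ⟨⟨hu0, -⟩, hp⟩
      exact ⟨hu0, hp⟩
    · rintro ⟨hu0, hp⟩
      exact ⟨⟨hu0, by rw [hp]; exact (klt_iff_idx_lt T hT g).mpr hw⟩, hp⟩
  · rw [Finset.disjoint_left]
    intro u hu1 hu2
    simp only [Finset.mem_filter, Finset.mem_univ, true_and] at hu1 hu2
    rw [hu2.2.1] at hu1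
    exact klt_irrefl T hT g _ hu1.2

lemma sum_cdeg : ∑ v : Fin (n+1), cdeg T hT v = n := by
  have h1 : (Finset.univ.filter (fun u : Fin (n+1) => u ≠ 0)).card = n := by
    rw [Finset.filter_ne', Finset.card_erase_of_mem (Finset.mem_univ _), Finset.card_univ,
      Fintype.card_fin]
    omega
  have h2 := Finset.card_eq_sum_card_fiberwise
    (s := Finset.univ.filter (fun u : Fin (n+1) => u ≠ 0))
    (f := fun u => parent T hT u) (t := Finset.univ)
    (fun u _ => Finset.mem_univ _)
  have h3 : ∑ v : Fin (n+1), cdeg T hT v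
      = (Finset.univ.filter (fun u : Fin (n+1) => u ≠ 0)).card := by
    rw [h2]
    apply Finset.sum_congr rfl
    intro w _
    rw [cdeg, Finset.filter_filter]
  rw [h3, h1]

lemma degree_eq (v : Fin (n+1)) :
    T.degree v = cdeg T hT v + (if v = 0 then 0 else 1) := by
  have hdeg : T.degree v = (T.neighborFinset v).card := rfl
  by_cases hv : v = 0
  · have hset : T.neighborFinset v
        = Finset.univ.filter (fun u => u ≠ 0 ∧ parent T hT u = v) := by
      ext u
      simp only [SimpleGraph.mem_neighborFinset, Finset.mem_filter, Finset.mem_univ, true_and]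
      rw [adj_iff T hT]
      constructor
      · rintro (⟨h, -⟩ | h)
        · exact absurd hv h
        · exact h
      · exact fun h => Or.inr h
    rw [hdeg, hset, cdeg]
    simp [hv]
  · have hnm : parent T hT v
        ∉ Finset.univ.filter (fun u => u ≠ 0 ∧ parent T hT u = v) := by
      intro hcon
      simp only [Finset.mem_filter, Finset.mem_univ, true_and] at hcon
      exact ne_parent_of_parent_eq T hT hcon.1 hcon.2 rfl
    have hset : T.neighborFinset v
        = insert (parent T hT v)
          (Finset.univ.filter (fun u => u ≠ 0 ∧ parent T hT u = v)) := by
      ext u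
      simp only [SimpleGraph.mem_neighborFinset, Finset.mem_insert, Finset.mem_filter,
        Finset.mem_univ, true_and]
      rw [adj_iff T hT]
      constructor
      · rintro (⟨-, h⟩ | h)
        · exact Or.inl h.symm
        · exact Or.inr h
      · rintro (rfl | h)
        · exact Or.inl ⟨hv, rfl⟩
        · exact Or.inr h
    rw [hdeg, hset, Finset.card_insert_of_notMem hnm, cdeg, if_neg hv]

lemma sl_lt_degree {v : Fin (n+1)} (h : v ≠ 0) : sl T hT g v < T.degree v := by
  rw [sl_eq T hT g h]
  exact (g v _).isLt

lemma rv_ne_sl {u w : Fin (n+1)} (hu : u ≠ 0) (hw : w ≠ 0) (hp : parent T hT u = w) :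
    rv T hT g u ≠ sl T hT g w := by
  have hadj : T.Adj w u := (hp ▸ adj_parent T hT hu).symm
  rw [rv_eq T hT g hu hp hadj, sl_eq T hT g hw]
  intro hcon
  have h2 := (g w).injective (Fin.val_injective hcon)
  have h3 : u = parent T hT w := congrArg Subtype.val h2
  exact (ne_parent_of_parent_eq T hT hu hp) h3

noncomputable def vtx (i : Fin n) : Fin (n+1) := (IdxE T hT g).symm i.succ

lemma vtx_ne_zero (i : Fin n) : vtx T hT g i ≠ 0 := by
  intro h
  have h2 : (IdxE T hT g) (vtx T hT g i) = i.succ := Equiv.apply_symm_apply _ _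
  rw [h, IdxE_zero T hT g] at h2
  exact (Fin.succ_ne_zero i) h2.symm

lemma vtx_surj {v : Fin (n+1)} (hv : v ≠ 0) : ∃ i : Fin n, vtx T hT g i = v := by
  have h0 : IdxE T hT g v ≠ 0 := by
    intro h
    rw [← IdxE_zero T hT g] at h
    exact hv ((IdxE T hT g).injective h)
  refine ⟨(IdxE T hT g v).pred h0, ?_⟩
  rw [vtx, Fin.succ_pred, Equiv.symm_apply_apply]

noncomputable def pairsL : List (ℕ × ℕ) :=
  List.ofFn (fun i : Fin n => (sl T hT g (vtx T hT g i),
    cdeg T hT (vtx T hT g i) - sl T hT g (vtx T hT g i)))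

noncomputable def word : List Bool :=
  FB (cdeg T hT 0) ++ ((pairsL T hT g).map BB).flatten

lemma sl_le_cdeg {v : Fin (n+1)} (hv : v ≠ 0) : sl T hT g v ≤ cdeg T hT v := by
  have h1 := sl_lt_degree T hT g hv
  rw [degree_eq T hT v, if_neg hv] at h1
  omega

lemma symm_IdxE_zero : (IdxE T hT g).symm 0 = 0 := by
  rw [Equiv.symm_apply_eq]
  exact (IdxE_zero T hT g).symm

lemma sum_cdeg_vtx : cdeg T hT 0 + ∑ i : Fin n, cdeg T hT (vtx T hT g i) = n := by
  have h1 : ∑ j : Fin (n+1), cdeg T hT ((IdxE T hT g).symm j) = n := by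
    rw [Equiv.sum_comp (IdxE T hT g).symm (cdeg T hT)]
    exact sum_cdeg T hT
  rw [Fin.sum_univ_succ, symm_IdxE_zero T hT g] at h1
  simpa only [vtx] using h1

lemma length_word : (word T hT g).length = 3 * n := by
  have hs := sum_cdeg_vtx T hT g
  rw [word, List.length_append, length_FB, List.length_flatten, List.map_map, pairsL,
    List.map_ofFn, List.sum_ofFn]
  have hpt : (∑ i : Fin n, ((List.length ∘ BB) ∘ fun i => (sl T hT g (vtx T hT g i),
        cdeg T hT (vtx T hT g i) - sl T hT g (vtx T hT g i))) i)
      = ∑ i : Fin n, (cdeg T hT (vtx T hT g i) + 2) := by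
    apply Finset.sum_congr rfl
    intro i _
    have := sl_le_cdeg T hT g (vtx_ne_zero T hT g i)
    simp only [Function.comp_apply, length_BB]
    omega
  rw [hpt, Finset.sum_add_distrib, Finset.sum_const, Finset.card_univ, Fintype.card_fin,
    smul_eq_mul]
  omega

noncomputable def Sset (w : Fin (n+1)) : Finset ℕ :=
  if w = 0 then Finset.range (T.degree w)
  else (Finset.range (T.degree w)).erase (sl T hT g w)

lemma card_Sset (w : Fin (n+1)) : (Sset T hT g w).card = cdeg T hT w := by
  rw [Sset]
  by_cases hw : w = 0
  · rw [if_pos hw, Finset.card_range, degree_eq T hT w, if_pos hw]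
    omega
  · rw [if_neg hw, Finset.card_erase_of_mem (Finset.mem_range.mpr (sl_lt_degree T hT g hw)),
      Finset.card_range, degree_eq T hT w, if_neg hw]
    omega

lemma rv_mem_Sset {u w : Fin (n+1)} (hu : u ≠ 0) (hp : parent T hT u = w) :
    rv T hT g u ∈ Sset T hT g w := by
  rw [Sset]
  by_cases hw : w = 0
  · rw [if_pos hw]
    exact Finset.mem_range.mpr (rv_lt_degree T hT g hu hp)
  · rw [if_neg hw]
    exact Finset.mem_erase.mpr ⟨rv_ne_sl T hT g hu hw hp,
      Finset.mem_range.mpr (rv_lt_degree T hT g hu hp)⟩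

lemma rv_injOn (w : Fin (n+1)) :
    Set.InjOn (rv T hT g)
      (Finset.univ.filter (fun u => u ≠ 0 ∧ parent T hT u = w)) := by
  intro a ha b hb h
  simp only [Finset.coe_filter, Set.mem_setOf_eq] at ha hb
  exact rv_sib_inj T hT g ha.2.1 hb.2.1 ha.2.2 hb.2.2 h

lemma image_rv (w : Fin (n+1)) :
    (Finset.univ.filter (fun u => u ≠ 0 ∧ parent T hT u = w)).image (rv T hT g)
      = Sset T hT g w := by
  apply Finset.eq_of_subset_of_card_le
  · intro y hy
    rw [Finset.mem_image] at hy
    obtain ⟨u, hu, rfl⟩ := hy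
    simp only [Finset.mem_filter, Finset.mem_univ, true_and] at hu
    exact rv_mem_Sset T hT g hu.1 hu.2
  · rw [card_Sset, Finset.card_image_of_injOn (rv_injOn T hT g w), cdeg]

lemma rnk_eq_rho {u : Fin (n+1)} (hu : u ≠ 0) :
    rnk T hT g u
      = ((Sset T hT g (parent T hT u)).filter (fun y => y < rv T hT g u)).card := by
  rw [← image_rv T hT g (parent T hT u), Finset.filter_image,
    Finset.card_image_of_injOn, rnk]
  · congr 1
    rw [Finset.filter_filter]
    apply Finset.filter_congr
    intro x _
    tauto
  · apply Set.InjOn.mono _ (rv_injOn T hT g (parent T hT u))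
    intro a ha
    rw [Finset.mem_coe, Finset.mem_filter] at ha
    rw [Finset.mem_coe]
    exact ha.1

end Enc
lemma rho_inj {S : Finset ℕ} {y y' : ℕ} (hy : y ∈ S) (hy' : y' ∈ S)
    (h : (S.filter (fun z => z < y)).card = (S.filter (fun z => z < y')).card) : y = y' := by
  rcases lt_trichotomy y y' with hlt | he | hlt
  · exfalso
    have : (S.filter (fun z => z < y)).card < (S.filter (fun z => z < y')).card := by
      apply Finset.card_lt_card
      constructor
      · intro z hz
        simp only [Finset.mem_filter] at hz ⊢
        exact ⟨hz.1, by omega⟩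
      · intro hcon
        have := hcon (Finset.mem_filter.mpr ⟨hy, hlt⟩)
        simp only [Finset.mem_filter] at this
        omega
    omega
  · exact he
  · exfalso
    have : (S.filter (fun z => z < y')).card < (S.filter (fun z => z < y)).card := by
      apply Finset.card_lt_card
      constructor
      · intro z hz
        simp only [Finset.mem_filter] at hz ⊢
        exact ⟨hz.1, by omega⟩
      · intro hcon
        have := hcon (Finset.mem_filter.mpr ⟨hy', hlt⟩)
        simp only [Finset.mem_filter] at this
        omega
    omega

section Two

variable (T : SimpleGraph (Fin (n+1))) (hT : T.IsTree)
  (g : ∀ p : Fin (n+1), T.neighborSet p ≃ Fin (T.degree p))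
  (T' : SimpleGraph (Fin (n+1))) (hT' : T'.IsTree)
  (g' : ∀ p : Fin (n+1), T'.neighborSet p ≃ Fin (T'.degree p))

lemma word_derive (hIdx : ∀ v, idx T hT g v = idx T' hT' g' v)
    (hword : word T hT g = word T' hT' g') :
    (∀ v, cdeg T hT v = cdeg T' hT' v) ∧
      (∀ v, v ≠ 0 → sl T hT g v = sl T' hT' g' v) := by
  have hE : IdxE T hT g = IdxE T' hT' g' := by
    apply Equiv.ext
    intro v
    exact Fin.ext (hIdx v)
  have hvtx : ∀ i : Fin n, vtx T hT g i = vtx T' hT' g' i := by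
    intro i
    rw [vtx, vtx, hE]
  rw [word, word] at hword
  obtain ⟨hc0, hpairs⟩ := word_parse hword
  have hfun := List.ofFn_inj.mp hpairs
  have hmain : ∀ v, v ≠ 0 → sl T hT g v = sl T' hT' g' v ∧ cdeg T hT v = cdeg T' hT' v := by
    intro v hv
    obtain ⟨i, rfl⟩ := vtx_surj T hT g hv
    have hi := congrFun hfun i
    rw [← hvtx i] at hi
    have h1 : sl T hT g (vtx T hT g i) = sl T' hT' g' (vtx T hT g i) :=
      congrArg Prod.fst hi
    have h2 := congrArg Prod.snd hi
    simp only at h1 h2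
    refine ⟨h1, ?_⟩
    have hle := sl_le_cdeg T hT g (vtx_ne_zero T hT g i)
    have hle' : sl T' hT' g' (vtx T hT g i) ≤ cdeg T' hT' (vtx T hT g i) := by
      apply sl_le_cdeg T' hT' g'
      rw [hvtx i] at hv ⊢
      exact hv
    omega
  constructor
  · intro v
    by_cases hv : v = 0
    · subst hv; exact hc0
    · exact (hmain v hv).2
  · intro v hv
    exact (hmain v hv).1

lemma parent_eq (hIdx : ∀ v, idx T hT g v = idx T' hT' g' v)
    (hcdeg : ∀ v, cdeg T hT v = cdeg T' hT' v) :
    ∀ v, v ≠ 0 → parent T hT v = parent T' hT' v ∧ rnk T hT g v = rnk T' hT' g' v := by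
  have hC : ∀ j, CumI T hT g j = CumI T' hT' g' j := by
    intro j
    rw [CumI, CumI]
    rw [Finset.filter_congr (fun x _ => by rw [hIdx x])]
    exact Finset.sum_congr rfl (fun x _ => hcdeg x)
  intro v hv
  have e1 := star T hT g hv
  have e2 := star T' hT' g' hv
  rw [← hIdx v, ← hIdx (parent T' hT' v), ← hC] at e2
  have hra := rnk_lt_cdeg T hT g hv
  have hrb := rnk_lt_cdeg T' hT' g' hv
  rw [← hcdeg (parent T' hT' v)] at hrb
  have hs1 := CumI_succ T hT g (parent T hT v)
  have hs2 : CumI T hT g (idx T hT g (parent T' hT' v) + 1)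
      = CumI T hT g (idx T hT g (parent T' hT' v)) + cdeg T hT (parent T' hT' v) := by
    have := CumI_succ T' hT' g' (parent T' hT' v)
    rw [← hIdx (parent T' hT' v), ← hC, ← hC, ← hcdeg (parent T' hT' v)] at this
    exact this
  have hpe : idx T hT g (parent T hT v) = idx T hT g (parent T' hT' v) := by
    rcases lt_trichotomy (idx T hT g (parent T hT v)) (idx T hT g (parent T' hT' v))
      with hlt | he | hlt
    · exfalso
      have hm := CumI_mono T hT g
        (show idx T hT g (parent T hT v) + 1 ≤ idx T hT g (parent T' hT' v) by omega)
      omega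
    · exact he
    · exfalso
      have hm := CumI_mono T hT g
        (show idx T hT g (parent T' hT' v) + 1 ≤ idx T hT g (parent T hT v) by omega)
      omega
  have hpp : parent T hT v = parent T' hT' v := idx_injective T hT g hpe
  refine ⟨hpp, ?_⟩
  rw [← hpp] at e2
  omega

lemma graph_eq (hpar : ∀ v, v ≠ (0 : Fin (n+1)) → parent T hT v = parent T' hT' v) :
    T = T' := by
  apply SimpleGraph.ext
  funext u v
  apply propext
  rw [adj_iff T hT, adj_iff T' hT']
  constructor
  · rintro (⟨h1, h2⟩ | ⟨h1, h2⟩)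
    · exact Or.inl ⟨h1, by rw [← hpar u h1]; exact h2⟩
    · exact Or.inr ⟨h1, by rw [← hpar v h1]; exact h2⟩
  · rintro (⟨h1, h2⟩ | ⟨h1, h2⟩)
    · exact Or.inl ⟨h1, by rw [hpar u h1]; exact h2⟩
    · exact Or.inr ⟨h1, by rw [hpar v h1]; exact h2⟩

end Two

section Same

variable (T : SimpleGraph (Fin (n+1))) (hT : T.IsTree)
  (g g' : ∀ p : Fin (n+1), T.neighborSet p ≃ Fin (T.degree p))

lemma rv_eq_of (hsl : ∀ v, v ≠ 0 → sl T hT g v = sl T hT g' v)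
    (hrnk : ∀ v, v ≠ 0 → rnk T hT g v = rnk T hT g' v) :
    ∀ u, u ≠ 0 → rv T hT g u = rv T hT g' u := by
  intro u hu
  have hS : Sset T hT g (parent T hT u) = Sset T hT g' (parent T hT u) := by
    rw [Sset, Sset]
    by_cases hw : parent T hT u = 0
    · rw [if_pos hw, if_pos hw]
    · rw [if_neg hw, if_neg hw, hsl _ hw]
  have h1 := rnk_eq_rho T hT g hu
  have h2 := rnk_eq_rho T hT g' hu
  have hy : rv T hT g u ∈ Sset T hT g (parent T hT u) := rv_mem_Sset T hT g hu rfl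
  have hy' : rv T hT g' u ∈ Sset T hT g (parent T hT u) := by
    rw [hS]; exact rv_mem_Sset T hT g' hu rfl
  exact rho_inj hy hy' (by rw [← h1, hrnk u hu, h2, ← hS])

lemma g_eq (hsl : ∀ v, v ≠ 0 → sl T hT g v = sl T hT g' v)
    (hrnk : ∀ v, v ≠ 0 → rnk T hT g v = rnk T hT g' v) : g = g' := by
  have hrv := rv_eq_of T hT g g' hsl hrnk
  funext v
  apply Equiv.ext
  rintro ⟨u, hadj⟩
  apply Fin.ext
  rcases (adj_iff T hT).mp hadj with ⟨h1, h2⟩ | ⟨h1, h2⟩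
  · have hx : (⟨u, hadj⟩ : T.neighborSet v) = ⟨parent T hT v, adj_parent T hT h1⟩ :=
      Subtype.ext h2.symm
    rw [hx, ← sl_eq T hT g h1, ← sl_eq T hT g' h1]
    exact hsl v h1
  · rw [← rv_eq T hT g h1 h2 hadj, ← rv_eq T hT g' h1 h2 hadj]
    exact hrv u h1

end Same

noncomputable def Enc (x : Σ T : {T : SimpleGraph (Fin (n+1)) // T.IsTree},
    ∀ p : Fin (n+1), ((T : SimpleGraph (Fin (n+1))).neighborSet p
      ≃ Fin ((T : SimpleGraph (Fin (n+1))).degree p))) :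
    {e : Equiv.Perm (Fin (n+1)) // e 0 = 0} × (Fin (3*(n+1)) → Bool) :=
  (⟨IdxE x.1.1 x.1.2 x.2, IdxE_zero x.1.1 x.1.2 x.2⟩,
    fun i => (word x.1.1 x.1.2 x.2).getD i false)

lemma Enc_injective : Function.Injective (Enc (n := n)) := by
  rintro ⟨⟨T, hT⟩, g⟩ ⟨⟨T', hT'⟩, g'⟩ h
  have h1 := congrArg Prod.fst h
  have h2 := congrArg Prod.snd h
  simp only [Enc] at h1 h2
  have hE : IdxE T hT g = IdxE T' hT' g' := congrArg Subtype.val h1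
  have hIdx : ∀ v, idx T hT g v = idx T' hT' g' v := by
    intro v
    have h3 : IdxE T hT g v = IdxE T' hT' g' v := by rw [hE]
    exact congrArg Fin.val h3
  have hword : word T hT g = word T' hT' g' := by
    apply List.ext_getElem (by rw [length_word, length_word])
    intro i hi1 hi2
    have hi3 : i < 3*(n+1) := by
      have := length_word T hT g
      omega
    have h4 := congrFun h2 ⟨i, hi3⟩
    rwa [List.getD_eq_getElem _ _ hi1, List.getD_eq_getElem _ _ hi2] at h4
  obtain ⟨hcdeg, hsl⟩ := word_derive T hT g T' hT' g' hIdx hword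
  have hpr := parent_eq T hT g T' hT' g' hIdx hcdeg
  have hTT : T = T' := graph_eq T hT T' hT' (fun v hv => (hpr v hv).1)
  subst hTT
  have hhT : hT = hT' := Subsingleton.elim _ _
  subst hhT
  have hgg : g = g' := g_eq T hT g g' (fun v hv => hsl v hv) (fun v hv => (hpr v hv).2)
  rw [hgg]

noncomputable def permFix : {e : Equiv.Perm (Fin (n+1)) // e 0 = 0} ≃ Equiv.Perm (Fin n) where
  toFun e := (Equiv.Perm.decomposeFin e.1).2
  invFun σ := ⟨Equiv.Perm.decomposeFin.symm (0, σ), by simp⟩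
  left_inv := by
    rintro ⟨e, he⟩
    apply Subtype.ext
    show Equiv.Perm.decomposeFin.symm (0, (Equiv.Perm.decomposeFin e).2) = e
    have hz : (Equiv.Perm.decomposeFin e).1 = 0 := by
      have h2 := Equiv.Perm.decomposeFin_symm_apply_zero
        (Equiv.Perm.decomposeFin e).1 (Equiv.Perm.decomposeFin e).2
      rw [Prod.mk.eta, Equiv.symm_apply_apply] at h2
      rw [← h2, he]
    rw [← hz, Prod.mk.eta, Equiv.symm_apply_apply]
  right_inv := by
    intro σ
    simp

lemma card_codomain :
    Fintype.card ({e : Equiv.Perm (Fin (n+1)) // e 0 = 0} × (Fin (3*(n+1)) → Bool))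
      = n.factorial * 2 ^ (3*(n+1)) := by
  rw [Fintype.card_prod, Fintype.card_congr (permFix (n := n)), Fintype.card_perm,
    Fintype.card_fin, Fintype.card_fun, Fintype.card_bool, Fintype.card_fin]

end TreeB

set_option maxHeartbeats 2000000 in
/-- The sum over all labeled trees `T` on `{1,…,q}` of the product of the factorials of
the vertex degrees of `T` is at most `(q-1)! · 8^q`. -/
theorem sum_trees_degree_factorial_bound (q : ℕ) (hq : 1 ≤ q) :
    ∑ T : {T : SimpleGraph (Fin q) // T.IsTree},
        ∏ p : Fin q, ((T : SimpleGraph (Fin q)).degree p).factorial ≤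
      (q - 1).factorial * 8 ^ q := by
  obtain ⟨n, rfl⟩ : ∃ n, q = n + 1 := ⟨q - 1, by omega⟩
  have hsum : ∑ T : {T : SimpleGraph (Fin (n+1)) // T.IsTree},
      ∏ p : Fin (n+1), ((T : SimpleGraph (Fin (n+1))).degree p).factorial
      = Fintype.card (Σ T : {T : SimpleGraph (Fin (n+1)) // T.IsTree},
          ∀ p : Fin (n+1), ((T : SimpleGraph (Fin (n+1))).neighborSet p
            ≃ Fin ((T : SimpleGraph (Fin (n+1))).degree p))) := by
    rw [Fintype.card_sigma]
    apply Finset.sum_congr rfl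
    intro T _
    rw [Fintype.card_pi]
    apply Finset.prod_congr rfl
    intro p _
    rw [Fintype.card_equiv (Fintype.equivFinOfCardEq
      (SimpleGraph.card_neighborSet_eq_degree (T : SimpleGraph (Fin (n+1))) p))]
    rw [SimpleGraph.card_neighborSet_eq_degree]
  rw [hsum]
  have hle := Fintype.card_le_of_injective _ (TreeB.Enc_injective (n := n))
  rw [TreeB.card_codomain] at hle
  have h8 : 2 ^ (3*(n+1)) = 8 ^ (n+1) := by
    rw [pow_mul]
    norm_num
  rw [h8] at hle
  simpa using hle
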